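/- For any measurable set M with 0 < μ(M) < ∞ and any p ≥ 1, liminf_{q→∞} ‖χ_M‖_{B_{p,q}} ≥ 1, where B_{p,q}(t) = t^p (log(e-1+t))^q. -/

import Mathlib

open MeasureTheory Filter Real Topology ENNReal

noncomputable def e0 : ℝ := Real.exp 1 - 1

noncomputable def Bpq (p q t : ℝ) : ℝ := t ^ p * (Real.log (e0 + t)) ^ q

noncomputable def BpqBar (p q t : ℝ) : ℝ := t ^ p * (Real.log (Real.exp 1 + t)) ^ q

/-- The Luxemburg norm of `f` with respect to the Young function `A`. -/
noncomputable def luxNorm {X : Type*} [MeasurableSpace X] (μ : Measure X)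
    (A : ℝ → ℝ) (f : X → ℝ) : ℝ≥0∞ :=
  sInf {lam : ℝ≥0∞ | 0 < lam ∧ lam ≠ ∞ ∧
    ∫⁻ x, ENNReal.ofReal (A (|f x| / lam.toReal)) ∂μ ≤ 1}

/-- `A` is a Young function: continuous, convex, increasing on `[0,∞)`,
`A 0 = 0` and `A t / t → ∞`. -/
def IsYoung (A : ℝ → ℝ) : Prop :=
  ContinuousOn A (Set.Ici 0) ∧ ConvexOn ℝ (Set.Ici 0) A ∧ MonotoneOn A (Set.Ici 0) ∧
    A 0 = 0 ∧ Tendsto (fun t => A t / t) atTop atTop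

theorem stmt4 {X : Type*} [MeasurableSpace X] (μ : Measure X)
    (M : Set X) (hM : MeasurableSet M) (hM0 : 0 < μ M) (hMfin : μ M < ∞)
    (p : ℝ) (hp : 1 ≤ p) :
    (1 : ℝ≥0∞) ≤ Filter.liminf
      (fun q : ℝ => luxNorm μ (Bpq p q) (M.indicator (fun _ => (1 : ℝ)))) atTop := by
  rw [le_liminf_iff]
  intro b hb
  -- pick a real s with b < ofReal s and 0 < s < 1
  have hb' : b ≠ ∞ := (hb.trans one_lt_top).ne
  set s : ℝ := (b.toReal + 1) / 2 with hs
  have hbt : b.toReal < 1 :=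
    ENNReal.toReal_lt_of_lt_ofReal (by simpa using hb)
  have hbt0 : 0 ≤ b.toReal := ENNReal.toReal_nonneg
  have hs0 : 0 < s := by positivity
  have hs1 : s < 1 := by simp only [hs]; linarith
  have hbs : b < ENNReal.ofReal s := by
    rw [ENNReal.lt_ofReal_iff_toReal_lt hb']
    simp only [hs]; linarith
  -- constants
  have hts : 1 < 1 / s := one_lt_one_div hs0 hs1
  set L : ℝ := Real.log (e0 + 1 / s) with hL
  have hL1 : 1 < L := by
    have : Real.exp 1 < e0 + 1 / s := by simp only [e0]; linarith
    calc (1 : ℝ) = Real.log (Real.exp 1) := (Real.log_exp 1).symm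
      _ < L := Real.log_lt_log (Real.exp_pos 1) this
  have hL0 : 0 < L := lt_trans one_pos hL1
  have hμ0 : 0 < (μ M).toReal := ENNReal.toReal_pos hM0.ne' hMfin.ne
  -- L ^ q → ∞
  have hLq : Tendsto (fun q : ℝ => L ^ q) atTop atTop := by
    have : (fun q : ℝ => L ^ q) = fun q => Real.exp (q * Real.log L) := by
      funext q; rw [Real.rpow_def_of_pos hL0, mul_comm]
    rw [this]
    exact Real.tendsto_exp_atTop.comp
      (Tendsto.atTop_mul_const (Real.log_pos hL1) tendsto_id)
  have hev : ∀ᶠ q : ℝ in atTop, 1 / (μ M).toReal < L ^ q ∧ 0 ≤ q :=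
    (hLq.eventually_gt_atTop _).and (eventually_ge_atTop 0)
  filter_upwards [hev] with q hq
  obtain ⟨hq1, hq0⟩ := hq
  refine lt_of_lt_of_le hbs (le_sInf ?_)
  rintro lam ⟨hlam0, hlamtop, hint⟩
  by_contra hcon
  push_neg at hcon
  have hr0 : 0 < lam.toReal := ENNReal.toReal_pos hlam0.ne' hlamtop
  have hrs : lam.toReal < s := ENNReal.toReal_lt_of_lt_ofReal hcon
  set r : ℝ := lam.toReal with hrdef
  have ht1 : 1 / s < 1 / r := one_div_lt_one_div_of_lt hr0 hrs
  have htgt : 1 < 1 / r := lt_trans hts ht1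
  -- the value of the integrand on M
  have hBge : L ^ q ≤ Bpq p q (1 / r) := by
    have h1 : 1 ≤ (1 / r) ^ p := Real.one_le_rpow htgt.le (le_trans zero_le_one hp)
    have h2 : L ^ q ≤ (Real.log (e0 + 1 / r)) ^ q := by
      apply Real.rpow_le_rpow hL0.le _ hq0
      exact Real.log_le_log (lt_trans (Real.exp_pos 1) (by simp only [e0]; linarith)) (by linarith)
    calc L ^ q ≤ (Real.log (e0 + 1 / r)) ^ q := h2
      _ ≤ (1 / r) ^ p * (Real.log (e0 + 1 / r)) ^ q := by
          have he : (2:ℝ) ≤ Real.exp 1 := by have := Real.add_one_le_exp 1; linarith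
          exact le_mul_of_one_le_left
            (Real.rpow_nonneg (Real.log_nonneg (by simp only [e0]; linarith)) q) h1
      _ = Bpq p q (1 / r) := rfl
  -- lower bound on the integral
  have hlow : ENNReal.ofReal (L ^ q) * μ M ≤
      ∫⁻ x, ENNReal.ofReal (Bpq p q (|M.indicator (fun _ => (1 : ℝ)) x| / r)) ∂μ := by
    calc ENNReal.ofReal (L ^ q) * μ M
        ≤ ENNReal.ofReal (Bpq p q (1 / r)) * μ M :=
          mul_le_mul_left (ENNReal.ofReal_le_ofReal hBge) _
      _ = ∫⁻ _ in M, ENNReal.ofReal (Bpq p q (1 / r)) ∂μ := (setLIntegral_const _ _).symm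
      _ = ∫⁻ x in M, ENNReal.ofReal (Bpq p q (|M.indicator (fun _ => (1 : ℝ)) x| / r)) ∂μ := by
          refine (setLIntegral_congr_fun hM (fun x hx => ?_)).symm
          rw [Set.indicator_of_mem hx, abs_one]
      _ ≤ _ := setLIntegral_le_lintegral _ _
  have hbig : 1 < ENNReal.ofReal (L ^ q) * μ M := by
    have hμeq : μ M = ENNReal.ofReal (μ M).toReal := (ENNReal.ofReal_toReal hMfin.ne).symm
    rw [hμeq, ← ENNReal.ofReal_mul (Real.rpow_nonneg hL0.le q), ENNReal.one_lt_ofReal]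
    rw [div_lt_iff₀ hμ0] at hq1
    linarith
  exact absurd (le_trans hlow hint) (not_le.2 hbig)
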